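/- Let n ≥ 2 and let G be a subset of N_n containing, for each pair i < j in Q_n, a transformation of type {i,j}. Let G' be the set of restrictions of the elements of G to Q_n ∖ {0} (each such restriction is a transformation of Q_n ∖ {0}, since elements of N_n never take the value 0). If the semigroup of transformations of Q_n ∖ {0} generated by G' contains every permutation of Q_n ∖ {0}, then G generates N_n as a semigroup. -/
import Mathlib


/-- The rank of a transformation of `Fin n`: the cardinality of its image. -/
def rank {n : ℕ} (t : Fin n → Fin n) : ℕ := (Finset.univ.image t).card

/-- `t` is of type `{i,j}`: `i < j`, `t` has rank `n-1`, and `t i = t j`. -/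
def OfType {n : ℕ} (t : Fin n → Fin n) (i j : Fin n) : Prop :=
  i < j ∧ rank t = n - 1 ∧ t i = t j

/-- The full non-returning semigroup of degree `n`. -/
def Nn (n : ℕ) : Set (Fin n → Fin n) := {t | ∀ q, (t q).val ≠ 0}

/-- The semigroup generated by `G` under (left-to-right) composition. -/
inductive genBy {α : Type} (G : Set (α → α)) : (α → α) → Prop
  | base {t : α → α} : t ∈ G → genBy G t
  | comp {s t : α → α} : genBy G s → genBy G t → genBy G (t ∘ s)

/-- A transformation of rank `n-1` collapsing `i ≠ j` is injective apart from the pair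
`{i,j}`. -/
lemma nearInj {n : ℕ} {t : Fin n → Fin n} {i j : Fin n}
    (hr : rank t = n - 1) (hij : i ≠ j) (hte : t i = t j)
    {x y : Fin n} (hxy : t x = t y) :
    x = y ∨ (x = i ∧ y = j) ∨ (x = j ∧ y = i) := by
  classical
  have key : ∀ u v : Fin n, u ≠ v → t u = t v →
      ∀ p q : Fin n, p ≠ u → q ≠ u → t p = t q → p = q := by
    intro u v huv htuv p q hp hq hpq
    have himg : (Finset.univ.erase u).image t = Finset.univ.image t := by
      apply Finset.Subset.antisymm (Finset.image_subset_image (Finset.erase_subset _ _))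
      intro x hx
      obtain ⟨r, -, hrx⟩ := Finset.mem_image.mp hx
      by_cases h : r = u
      · exact Finset.mem_image.mpr ⟨v, Finset.mem_erase.mpr ⟨Ne.symm huv, Finset.mem_univ _⟩,
          by rw [← htuv, ← h, hrx]⟩
      · exact Finset.mem_image.mpr ⟨r, Finset.mem_erase.mpr ⟨h, Finset.mem_univ _⟩, hrx⟩
    have hcard : ((Finset.univ.erase u).image t).card = (Finset.univ.erase u).card := by
      rw [himg, Finset.card_erase_of_mem (Finset.mem_univ _), Finset.card_univ, Fintype.card_fin]
      exact hr
    exact Finset.injOn_of_card_image_eq hcard (by simp [hp]) (by simp [hq]) hpq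
  by_cases h1 : x ≠ j ∧ y ≠ j
  · exact Or.inl (key j i hij.symm hte.symm x y h1.1 h1.2 hxy)
  · by_cases h2 : x ≠ i ∧ y ≠ i
    · exact Or.inl (key i j hij hte x y h2.1 h2.2 hxy)
    · push_neg at h1 h2
      by_cases hxj : x = j
      · have hxi : x ≠ i := by rw [hxj]; exact hij.symm
        exact Or.inr (Or.inr ⟨hxj, h2 hxi⟩)
      · have hyj : y = j := h1 hxj
        have hxi : x = i := by
          by_contra hxi
          have := h2 hxi
          exact hij (this ▸ hyj ▸ rfl)
        exact Or.inr (Or.inl ⟨hxi, hyj⟩)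

theorem stmt2 (n : ℕ) (hn : 2 ≤ n) (G : Set (Fin n → Fin n)) (hsub : G ⊆ Nn n)
    (htypes : ∀ i j : Fin n, i < j → ∃ g ∈ G, OfType g i j)
    (G' : Set ({q : Fin n // q.val ≠ 0} → {q : Fin n // q.val ≠ 0}))
    (hG' : ∀ f, f ∈ G' ↔ ∃ g ∈ G, ∀ x : {q : Fin n // q.val ≠ 0}, (f x).val = g x.val)
    (hperm : ∀ σ : Equiv.Perm {q : Fin n // q.val ≠ 0}, genBy G' ⇑σ) :
    {t | genBy G t} = Nn n := by
  classical
  have hn0 : 0 < n := by omega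
  set z0 : Fin n := ⟨0, hn0⟩ with hz0
  have hz0iff : ∀ x : Fin n, x ≠ z0 ↔ x.val ≠ 0 := by
    intro x; constructor
    · intro h h'; exact h (Fin.ext h')
    · intro h h'; exact h (by rw [h'])
  -- closure: everything generated by G lies in Nn
  have hclosure : ∀ t, genBy G t → t ∈ Nn n := by
    intro t ht
    induction ht with
    | base h => exact hsub h
    | comp hs ht ihs iht => intro q; exact iht _
  -- image of an Nn element is inside univ.erase z0
  have himgsub : ∀ t, t ∈ Nn n → Finset.univ.image t ⊆ Finset.univ.erase z0 := by
    intro t ht x hx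
    obtain ⟨q, -, hq⟩ := Finset.mem_image.mp hx
    exact Finset.mem_erase.mpr ⟨(hz0iff x).mpr (hq ▸ ht q), Finset.mem_univ _⟩
  have hcarderase : (Finset.univ.erase z0).card = n - 1 := by
    rw [Finset.card_erase_of_mem (Finset.mem_univ _), Finset.card_univ, Fintype.card_fin]
  -- rank bound
  have hrle : ∀ t, t ∈ Nn n → rank t ≤ n - 1 := by
    intro t ht
    rw [← hcarderase]
    exact Finset.card_le_card (himgsub t ht)
  -- lifting generated permutation-restrictions back to G-generated maps
  have hlift : ∀ f, genBy G' f →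
      ∃ g, genBy G g ∧ ∀ x : {q : Fin n // q.val ≠ 0}, (f x).val = g x.val := by
    intro f hf
    induction hf with
    | base h =>
      obtain ⟨g, hg, hgf⟩ := (hG' _).1 h
      exact ⟨g, genBy.base hg, hgf⟩
    | @comp s t hs ht ihs iht =>
      obtain ⟨gs, hgs, hgs'⟩ := ihs
      obtain ⟨gt, hgt, hgt'⟩ := iht
      refine ⟨gt ∘ gs, genBy.comp hgs hgt, fun x => ?_⟩
      have : (t (s x)).val = gt ((s x).val) := hgt' (s x)
      simp only [Function.comp_apply, this, hgs' x]
  -- non-injectivity from small rank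
  have hnoninj : ∀ t : Fin n → Fin n, rank t < n → ∃ a b, t a = t b ∧ a ≠ b := by
    intro t hr
    rw [← Function.not_injective_iff]
    intro h
    have := Finset.card_image_of_injective Finset.univ h
    rw [Finset.card_univ, Fintype.card_fin] at this
    rw [rank, this] at hr
    omega
  -- Step 1: rank n-1 elements of Nn are generated
  have hrank1 : ∀ t, t ∈ Nn n → rank t = n - 1 → genBy G t := by
    intro t htN htr
    obtain ⟨a, b, hab, hne⟩ := hnoninj t (by omega)
    -- normalize to i < j
    obtain ⟨i, j, hij, hte⟩ : ∃ i j : Fin n, i < j ∧ t i = t j := by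
      rcases lt_or_gt_of_ne hne with h | h
      · exact ⟨a, b, h, hab⟩
      · exact ⟨b, a, h, hab.symm⟩
    obtain ⟨g, hgG, hgij, hgr, hge⟩ := htypes i j hij
    have hgN : g ∈ Nn n := hsub hgG
    have hijne : i ≠ j := ne_of_lt hij
    -- g is surjective onto the nonzero elements
    have hgimg : Finset.univ.image g = Finset.univ.erase z0 := by
      apply Finset.eq_of_subset_of_card_le (himgsub g hgN)
      rw [hcarderase]; exact le_of_eq hgr.symm
    have hsurj : ∀ x : Fin n, x.val ≠ 0 → ∃ q, g q = x := by
      intro x hx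
      have : x ∈ Finset.univ.image g := by
        rw [hgimg]; exact Finset.mem_erase.mpr ⟨(hz0iff x).mpr hx, Finset.mem_univ _⟩
      obtain ⟨q, -, hq⟩ := Finset.mem_image.mp this
      exact ⟨q, hq⟩
    set D := {q : Fin n // q.val ≠ 0}
    let pick : D → Fin n := fun x => Classical.choose (hsurj x.val x.prop)
    have hpick : ∀ x : D, g (pick x) = x.val := fun x => Classical.choose_spec (hsurj x.val x.prop)
    let sfun : D → D := fun x => ⟨t (pick x), htN _⟩
    have hinj : Function.Injective sfun := by
      intro x y hxy
      have h1 : t (pick x) = t (pick y) := congrArg Subtype.val hxy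
      have h2 : g (pick x) = g (pick y) := by
        rcases nearInj htr hijne hte h1 with h | ⟨ha, hb⟩ | ⟨ha, hb⟩
        · rw [h]
        · rw [ha, hb, hge]
        · rw [ha, hb, hge]
      apply Subtype.ext
      rw [← hpick x, ← hpick y, h2]
    let σ : Equiv.Perm D := Equiv.ofBijective sfun (Finite.injective_iff_bijective.mp hinj)
    obtain ⟨g', hg', hg'σ⟩ := hlift _ (hperm σ)
    have hfin : t = g' ∘ g := by
      funext q
      have hgq : (g q).val ≠ 0 := hgN q
      have h1 : (g' ∘ g) q = g' ((⟨g q, hgq⟩ : D).val) := rfl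
      have h2 : g' ((⟨g q, hgq⟩ : D).val) = (σ ⟨g q, hgq⟩).val := (hg'σ _).symm
      have h3 : (σ ⟨g q, hgq⟩ : D).val = t (pick ⟨g q, hgq⟩) := rfl
      have h4 : g (pick ⟨g q, hgq⟩) = g q := hpick ⟨g q, hgq⟩
      have h5 : t (pick ⟨g q, hgq⟩) = t q := by
        rcases nearInj hgr hijne hge h4 with h | ⟨ha, hb⟩ | ⟨ha, hb⟩
        · rw [h]
        · rw [ha, hb, hte]
        · rw [ha, hb, hte]
      rw [h1, h2, h3, h5]
    rw [hfin]
    exact genBy.comp (genBy.base hgG) hg'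
  -- Step 2: downward induction on rank
  have hmain : ∀ k t, t ∈ Nn n → n - 1 - rank t ≤ k → genBy G t := by
    intro k
    induction k with
    | zero =>
      intro t htN hk
      have := hrle t htN
      exact hrank1 t htN (by omega)
    | succ k ih =>
      intro t htN hk
      by_cases hr : rank t = n - 1
      · exact hrank1 t htN hr
      · have hrlt : rank t < n - 1 := lt_of_le_of_ne (hrle t htN) hr
        -- find c outside the image, nonzero
        obtain ⟨c, hcmem, hcnot⟩ : ∃ c ∈ Finset.univ.erase z0, c ∉ Finset.univ.image t := by
          rw [← Finset.not_subset]
          intro hss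
          have := Finset.card_le_card hss
          rw [hcarderase] at this
          rw [rank] at hrlt
          omega
        have hc0 : c.val ≠ 0 := (hz0iff c).mp (Finset.mem_erase.mp hcmem).1
        obtain ⟨a, b, hab, hne⟩ := hnoninj t (by omega)
        set t' : Fin n → Fin n := Function.update t a c with ht'
        have ht'N : t' ∈ Nn n := by
          intro q
          by_cases h : q = a
          · rw [ht', h, Function.update_self]; exact hc0
          · rw [ht', Function.update_of_ne h]; exact htN q
        have himg' : Finset.univ.image t' = insert c (Finset.univ.image t) := by
          ext x
          simp only [Finset.mem_image, Finset.mem_insert, Finset.mem_univ, true_and]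
          constructor
          · rintro ⟨q, hq⟩
            by_cases h : q = a
            · left; rw [← hq, ht', h, Function.update_self]
            · right; exact ⟨q, by rwa [ht', Function.update_of_ne h] at hq⟩
          · rintro (h | ⟨q, hq⟩)
            · exact ⟨a, by rw [ht', Function.update_self, h]⟩
            · by_cases h : q = a
              · exact ⟨b, by rw [ht', Function.update_of_ne hne.symm, ← hab, ← h, hq]⟩
              · exact ⟨q, by rw [ht', Function.update_of_ne h, hq]⟩
        have hrank' : rank t' = rank t + 1 := by
          rw [rank, rank, himg', Finset.card_insert_of_notMem hcnot]
        -- the collapsing map m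
        set m : Fin n → Fin n := fun q => if q = z0 then c else if q = c then t a else q with hm
        have hmN : m ∈ Nn n := by
          intro q
          simp only [hm]
          split_ifs with h1 h2
          · exact hc0
          · exact htN a
          · exact (hz0iff q).mp h1
        have hta0 : (t a).val ≠ 0 := htN a
        have htac : t a ≠ c := by
          intro h
          exact hcnot (h ▸ Finset.mem_image.mpr ⟨a, Finset.mem_univ _, rfl⟩)
        have hcz0 : c ≠ z0 := (hz0iff c).mpr hc0
        have hmimg : Finset.univ.image m = Finset.univ.erase z0 := by
          apply Finset.Subset.antisymm (himgsub m hmN)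
          intro x hx
          have hx0 : x ≠ z0 := (Finset.mem_erase.mp hx).1
          apply Finset.mem_image.mpr
          by_cases h1 : x = c
          · exact ⟨z0, Finset.mem_univ _, by rw [hm]; simp [h1]⟩
          · by_cases h2 : x = t a
            · exact ⟨c, Finset.mem_univ _, by rw [hm]; simp [if_neg hcz0, h2]⟩
            · exact ⟨x, Finset.mem_univ _, by rw [hm]; simp [if_neg hx0, if_neg h1]⟩
        have hmr : rank m = n - 1 := by rw [rank, hmimg, hcarderase]
        have hfact : t = m ∘ t' := by
          funext q
          by_cases h : q = a
          · have : t' q = c := by rw [ht', h, Function.update_self]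
            simp only [Function.comp_apply, this, hm]
            split_ifs with h1'
            · exact absurd h1' hcz0
            · rw [h]
          · have h1 : t' q = t q := by rw [ht', Function.update_of_ne h]
            have h2 : t q ≠ z0 := (hz0iff _).mpr (htN q)
            have h3 : t q ≠ c := by
              intro hq
              exact hcnot (hq ▸ Finset.mem_image.mpr ⟨q, Finset.mem_univ _, rfl⟩)
            simp only [Function.comp_apply, h1, hm]
            rw [if_neg h2, if_neg h3]
        rw [hfact]
        exact genBy.comp (ih t' ht'N (by omega)) (hrank1 m hmN hmr)
  ext t
  simp only [Set.mem_setOf_eq]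
  exact ⟨hclosure t, fun ht => hmain n t ht (by omega)⟩
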